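/- Let ω, p0, Δ, C_l be positive reals, n ≥ 1 a real, ν ∈ (0,1), and ρ ∈ (0,1]. Set K_u(d) = ω · V_d · p0 (where V_d is the volume of the unit Euclidean ball in ℝ^d) and K_l(d) = C_l · d. Then there exists a threshold d0 ∈ ℕ such that for all d ≥ d0, K_u(d) · Δ^d · n < K_l(d) · (log(1/ν))² · n^{ρ/(ρ+d)}. In particular, for d ≥ d0 there is no natural number k satisfying K_l(d) · (log(1/ν))² · n^{ρ/(ρ+d)} ≤ k ≤ K_u(d) · Δ^d · n. -/

import Mathlib

open Filter Real


lemma halfDiv_tendsto : Tendsto (fun d : ℕ => d / 2) atTop atTop :=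
  tendsto_atTop_atTop.mpr (fun b => ⟨2 * b, fun d hd => Nat.le_div_iff_mul_le (by norm_num) |>.mpr (by omega)⟩)

lemma key (a : ℝ) (ha : 0 < a) :
    Tendsto (fun d : ℕ => a ^ d / Real.Gamma ((d : ℝ) / 2 + 1)) atTop (nhds 0) := by
  set b := max a 1 with hb
  have hb1 : 1 ≤ b := le_max_right _ _
  have hb0 : 0 < b := lt_of_lt_of_le one_pos hb1
  have hg : Tendsto (fun m : ℕ => b * ((b ^ 2) ^ m / m.factorial)) atTop (nhds 0) := by
    have := (FloorSemiring.tendsto_pow_div_factorial_atTop (b ^ 2)).const_mul b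
    simpa using this
  have hcomp : Tendsto (fun d : ℕ => b * ((b ^ 2) ^ (d / 2) / (d / 2).factorial)) atTop (nhds 0) :=
    hg.comp halfDiv_tendsto
  apply squeeze_zero' (g := fun d : ℕ => b * ((b ^ 2) ^ (d / 2) / (d / 2).factorial))
  · exact Filter.Eventually.of_forall fun d => div_nonneg (pow_nonneg ha.le d) (Real.Gamma_pos_of_pos (by positivity)).le
  · filter_upwards [eventually_ge_atTop 2] with d hd
    set m := d / 2 with hm
    have hm1 : 1 ≤ m := by omega
    have hΓ : (m.factorial : ℝ) ≤ Real.Gamma ((d : ℝ) / 2 + 1) := by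
      rw [← Real.Gamma_nat_eq_factorial]
      have hmR : (1:ℝ) ≤ (m:ℝ) := by exact_mod_cast hm1
      rcases eq_or_lt_of_le (show (m : ℝ) + 1 ≤ (d : ℝ) / 2 + 1 by
        have : (2 * m : ℕ) ≤ d := by omega
        have : (2 * m : ℝ) ≤ d := by exact_mod_cast this
        linarith) with h | h
      · rw [h]
      · exact (Real.Gamma_strictMonoOn_Ici
          (by simp only [Set.mem_Ici]; linarith)
          (by simp only [Set.mem_Ici]; linarith) h).le
    have hΓ0 : (0 : ℝ) < m.factorial := by exact_mod_cast m.factorial_pos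
    have hnum : a ^ d ≤ b * (b ^ 2) ^ m := by
      calc a ^ d ≤ b ^ d := pow_le_pow_left₀ ha.le (le_max_left a 1) d
        _ ≤ b ^ (2 * m + 1) := pow_le_pow_right₀ hb1 (by omega)
        _ = b * (b ^ 2) ^ m := by ring
    calc a ^ d / Real.Gamma ((d : ℝ) / 2 + 1) ≤ (b * (b ^ 2) ^ m) / m.factorial := by
          apply div_le_div₀ (by positivity) hnum hΓ0 hΓ
      _ = b * ((b ^ 2) ^ m / m.factorial) := by ring
  · exact hcomp



/-- `V_d = π^(d/2) / Γ(d/2 + 1)`, the Lebesgue volume of the unit Euclidean ball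
in `ℝ^d`. -/
noncomputable def unitBallVolume (d : ℕ) : ℝ :=
  Real.pi ^ ((d : ℝ) / 2) / Real.Gamma ((d : ℝ) / 2 + 1)

/-- **High-dimensional k-NN vs Bayes: impossibility of the admissible range.**
With `K_u(d) = ω · V_d · p0` and `K_l(d) = C_l · d`, there is a threshold `d0` such
that for all `d ≥ d0` the upper endpoint drops below the lower endpoint:
`K_u(d) Δ^d n < K_l(d) (log(1/ν))² n^(ρ/(ρ+d))`, and in particular no natural number
`k` lies in the range `[K_l(d) (log(1/ν))² n^(ρ/(ρ+d)), K_u(d) Δ^d n]`. -/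
theorem no_valid_k_high_dimension
    (ω p0 Δ Cl : ℝ) (hω : 0 < ω) (hp0 : 0 < p0) (hΔ : 0 < Δ) (hCl : 0 < Cl)
    (n : ℝ) (hn : 1 ≤ n) (ν : ℝ) (hν : ν ∈ Set.Ioo (0 : ℝ) 1)
    (ρ : ℝ) (hρ : ρ ∈ Set.Ioc (0 : ℝ) 1) :
    ∃ d0 : ℕ, ∀ d : ℕ, d0 ≤ d →
      (ω * unitBallVolume d * p0) * Δ ^ d * n
          < (Cl * d) * Real.log (1 / ν) ^ 2 * n ^ (ρ / (ρ + d)) ∧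
        ¬∃ k : ℕ,
          (Cl * d) * Real.log (1 / ν) ^ 2 * n ^ (ρ / (ρ + d)) ≤ (k : ℝ) ∧
            (k : ℝ) ≤ (ω * unitBallVolume d * p0) * Δ ^ d * n := by
  obtain ⟨hν0, hν1⟩ := hν
  obtain ⟨hρ0, _⟩ := hρ
  set L := Real.log (1 / ν) with hLdef
  have hL : 0 < L := Real.log_pos ((one_lt_div hν0).mpr hν1)
  set a := Real.sqrt Real.pi * Δ with hadef
  have ha : 0 < a := mul_pos (Real.sqrt_pos.mpr Real.pi_pos) hΔ
  have htend : Tendsto (fun d : ℕ => ω * p0 * n * (a ^ d / Real.Gamma ((d : ℝ) / 2 + 1)))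
      atTop (nhds 0) := by
    simpa using (key a ha).const_mul (ω * p0 * n)
  have hev : ∀ᶠ d : ℕ in atTop,
      ω * p0 * n * (a ^ d / Real.Gamma ((d : ℝ) / 2 + 1)) < Cl * L ^ 2 :=
    htend.eventually_lt_const (by positivity)
  obtain ⟨d1, hd1⟩ := eventually_atTop.mp hev
  refine ⟨max d1 1, fun d hd => ?_⟩
  have hd1' : d1 ≤ d := le_trans (le_max_left _ _) hd
  have hdnat1 : 1 ≤ d := le_trans (le_max_right _ _) hd
  have hdR : (1 : ℝ) ≤ (d : ℝ) := by exact_mod_cast hdnat1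
  have hΓpos : 0 < Real.Gamma ((d : ℝ) / 2 + 1) := Real.Gamma_pos_of_pos (by positivity)
  have hpow : Real.pi ^ ((d : ℝ) / 2) = Real.sqrt Real.pi ^ d := by
    rw [Real.sqrt_eq_rpow, ← Real.rpow_natCast (Real.pi ^ (1 / 2 : ℝ)) d,
      ← Real.rpow_mul Real.pi_pos.le]
    ring_nf
  have hLHS : (ω * unitBallVolume d * p0) * Δ ^ d * n
      = ω * p0 * n * (a ^ d / Real.Gamma ((d : ℝ) / 2 + 1)) := by
    rw [unitBallVolume, hpow, hadef, mul_pow]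
    field_simp
  have hub : (ω * unitBallVolume d * p0) * Δ ^ d * n < Cl * L ^ 2 := by
    rw [hLHS]; exact hd1 d hd1'
  have hrp : (1 : ℝ) ≤ n ^ (ρ / (ρ + d)) :=
    Real.one_le_rpow hn (div_nonneg hρ0.le (by positivity))
  have hlb : Cl * L ^ 2 ≤ (Cl * d) * L ^ 2 * n ^ (ρ / (ρ + d)) := by
    have h1 : Cl * L ^ 2 ≤ (Cl * d) * L ^ 2 :=
      mul_le_mul_of_nonneg_right (le_mul_of_one_le_right hCl.le hdR) (pow_pos hL 2).le
    nlinarith [mul_pos (mul_pos hCl (lt_of_lt_of_le one_pos hdR)) (pow_pos hL 2)]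
  have hmain := lt_of_lt_of_le hub hlb
  refine ⟨hmain, ?_⟩
  rintro ⟨k, hk1, hk2⟩
  linarith
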